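/- Let b ≥ 1, z(b) ∈ (0,1) the unique root of ∑_{i=b+1}^{2b+1} z^i = 1, and define ρ⋆(b) = (1 - z)(1 - z^{b+1}) / (1 + b - bz - 2z^{b+1} - 2bz^{b+1} + z^{b+2} + 2bz^{b+2}) with z = z(b). Then b · ρ⋆(b) → 1 as b → ∞. -/

import Mathlib

open Finset Filter

private lemma aux_key10 (b : ℕ) (z : ℝ) (hz1 : z < 1)
    (hsum : ∑ i ∈ Finset.Icc (b + 1) (2 * b + 1), z ^ i = 1) :
    1 - z = z ^ (b + 1) * (1 - z ^ (b + 1)) := by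
  have hne : z ≠ 1 := ne_of_lt hz1
  have h : Finset.Icc (b + 1) (2 * b + 1) = Finset.Ico (b + 1) (2 * b + 2) := by
    ext x; simp; omega
  rw [h, geom_sum_Ico hne (by omega)] at hsum
  have hz1' : z - 1 ≠ 0 := sub_ne_zero.mpr hne
  rw [div_eq_one_iff_eq hz1'] at hsum
  have h2 : z ^ (2 * b + 2) = (z ^ (b + 1)) ^ 2 := by
    rw [← pow_mul]; ring_nf
  rw [h2] at hsum
  nlinarith [hsum]

private lemma aux_sq10 (b : ℕ) (z : ℝ) (hz0 : 0 < z) (hz1 : z < 1)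
    (hsum : ∑ i ∈ Finset.Icc (b + 1) (2 * b + 1), z ^ i = 1) :
    ((b : ℝ) + 1) * (z ^ (b + 1)) ^ 2 ≤ 1 := by
  have hcard : (Finset.Icc (b + 1) (2 * b + 1)).card = b + 1 := by
    rw [Nat.card_Icc]; omega
  have hlow : ∀ i ∈ Finset.Icc (b + 1) (2 * b + 1), z ^ (2 * b + 2) ≤ z ^ i := by
    intro i hi
    simp only [Finset.mem_Icc] at hi
    exact pow_le_pow_of_le_one hz0.le hz1.le (by omega)
  have h := Finset.card_nsmul_le_sum _ _ _ hlow
  rw [hcard, hsum, nsmul_eq_mul] at h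
  have h2 : z ^ (2 * b + 2) = (z ^ (b + 1)) ^ 2 := by rw [← pow_mul]; ring_nf
  rw [h2] at h
  push_cast at h
  linarith

private lemma aux_log10 (b : ℕ) (z : ℝ) (hb : 1 ≤ b) (hz0 : 0 < z) (hz1 : z < 1)
    (hkey : 1 - z = z ^ (b + 1) * (1 - z ^ (b + 1)))
    (hwhalf : z ^ (b + 1) ≤ 1 / 2) :
    (1 / 4) * Real.log (z ^ (b + 1))⁻¹ ≤ (b : ℝ) * z ^ (b + 1) := by
  set W := z ^ (b + 1) with hWd
  have hW0 : 0 < W := pow_pos hz0 _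
  have hzhalf : 1 / 2 ≤ z := by nlinarith
  have hB : (1 : ℝ) ≤ (b : ℝ) := by exact_mod_cast hb
  have hexp : Real.exp (-((1 - z) / z)) ≤ z := by
    have h1 : (1 - z) / z + 1 ≤ Real.exp ((1 - z) / z) := Real.add_one_le_exp _
    have h2 : (1 : ℝ) / z ≤ Real.exp ((1 - z) / z) := by
      have : (1 - z) / z + 1 = 1 / z := by field_simp; ring
      linarith
    rw [Real.exp_neg]
    calc (Real.exp ((1 - z) / z))⁻¹ ≤ (1 / z)⁻¹ := by
          apply inv_anti₀ (by positivity) h2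
      _ = z := by field_simp
  have hpow : Real.exp (-((1 - z) / z)) ^ (b + 1) ≤ W :=
    pow_le_pow_left₀ (Real.exp_pos _).le hexp _
  have hpow2 : Real.exp (-(((b : ℝ) + 1) * ((1 - z) / z))) ≤ W := by
    rw [← Real.exp_nat_mul] at hpow
    convert hpow using 2
    push_cast
    ring
  have hexpo : (((b : ℝ) + 1) * ((1 - z) / z)) ≤ 4 * ((b : ℝ) * W) := by
    have hre : ((b : ℝ) + 1) * ((1 - z) / z) = (((b : ℝ) + 1) * (1 - z)) / z := by ring
    rw [hre, div_le_iff₀ hz0]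
    have h1z : 1 - z ≤ W := by nlinarith [hW0.le, hwhalf]
    have hA : ((b:ℝ)+1) * (1 - z) ≤ ((b:ℝ)+1) * W :=
      mul_le_mul_of_nonneg_left h1z (by positivity)
    have hB2 : (0:ℝ) ≤ 2 * (b:ℝ) * W * (2 * z - 1) := by
      have : (0:ℝ) ≤ 2 * z - 1 := by linarith
      positivity
    have hC : (0:ℝ) ≤ ((b:ℝ) - 1) * W := mul_nonneg (by linarith) hW0.le
    nlinarith [hA, hB2, hC]
  have hfin : Real.exp (-(4 * ((b : ℝ) * W))) ≤ W :=
    le_trans (by exact Real.exp_le_exp.mpr (by linarith)) hpow2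
  have hlog : -(4 * ((b : ℝ) * W)) ≤ Real.log W := by
    have := Real.log_le_log (Real.exp_pos _) hfin
    rwa [Real.log_exp] at this
  rw [Real.log_inv]
  linarith

/-- Let `z b ∈ (0,1)` be the root of `z^{b+1} + ⋯ + z^{2b+1} = 1` and
`ρ⋆(b) = (1-z)(1-z^{b+1}) / (1 + b - bz - 2z^{b+1} - 2bz^{b+1} + z^{b+2} + 2bz^{b+2})`.
Then `b · ρ⋆(b) → 1` as `b → ∞`. -/
theorem stmt10 (z : ℕ → ℝ)
    (hz : ∀ b, 1 ≤ b → 0 < z b ∧ z b < 1 ∧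
      ∑ i ∈ Finset.Icc (b + 1) (2 * b + 1), (z b) ^ i = 1) :
    Tendsto (fun b : ℕ =>
        (b : ℝ) * ((1 - z b) * (1 - (z b) ^ (b + 1)) /
          (1 + (b : ℝ) - (b : ℝ) * z b - 2 * (z b) ^ (b + 1) -
            2 * (b : ℝ) * (z b) ^ (b + 1) + (z b) ^ (b + 2) +
            2 * (b : ℝ) * (z b) ^ (b + 2))))
      atTop (nhds 1) := by
  have hfacts : ∀ᶠ b in atTop, 0 < z b ∧ z b < 1 ∧
      1 - z b = z b ^ (b+1) * (1 - z b ^ (b+1)) ∧ ((b:ℝ)+1) * (z b ^ (b+1))^2 ≤ 1 := by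
    filter_upwards [eventually_ge_atTop 1] with b hb
    obtain ⟨h0, h1, hs⟩ := hz b hb
    exact ⟨h0, h1, aux_key10 b (z b) h1 hs, aux_sq10 b (z b) h0 h1 hs⟩
  have hWpos : ∀ᶠ b : ℕ in atTop, 0 < z b ^ (b+1) := by
    filter_upwards [hfacts] with b hb; exact pow_pos hb.1 _
  have hWle : ∀ᶠ b : ℕ in atTop, z b ^ (b+1) ≤ Real.sqrt (1/((b:ℝ)+1)) := by
    filter_upwards [hfacts, hWpos] with b hb hw
    obtain ⟨h0, h1, hk, hsq⟩ := hb
    have h2 : (z b ^ (b+1))^2 ≤ 1/((b:ℝ)+1) := by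
      rw [le_div_iff₀ (by positivity)]; linarith [hsq]
    calc z b ^ (b+1) = Real.sqrt ((z b ^ (b+1))^2) := (Real.sqrt_sq hw.le).symm
    _ ≤ Real.sqrt (1/((b:ℝ)+1)) := Real.sqrt_le_sqrt h2
  have hsqrt0 : Tendsto (fun b : ℕ => Real.sqrt (1/((b:ℝ)+1))) atTop (nhds 0) := by
    have h1 : Tendsto (fun b : ℕ => 1/((b:ℝ)+1)) atTop (nhds 0) :=
      tendsto_one_div_add_atTop_nhds_zero_nat
    have h2 := (Real.continuous_sqrt.tendsto 0).comp h1
    simp only [Function.comp_def, Real.sqrt_zero] at h2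
    exact h2
  have hW0 : Tendsto (fun b : ℕ => z b ^ (b+1)) atTop (nhds 0) :=
    squeeze_zero' (hWpos.mono fun b h => h.le) hWle hsqrt0
  have hc1 : Tendsto (fun _ : ℕ => (1:ℝ)) atTop (nhds 1) := tendsto_const_nhds
  have hz1 : Tendsto z atTop (nhds 1) := by
    have h1 : Tendsto (fun b : ℕ => 1 - z b ^ (b+1) * (1 - z b ^ (b+1))) atTop (nhds 1) := by
      have := hc1.sub (hW0.mul (hc1.sub hW0))
      simpa using this
    apply Tendsto.congr' ?_ h1
    filter_upwards [hfacts] with b hb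
    linarith [hb.2.2.1]
  have hWhalf : ∀ᶠ b : ℕ in atTop, z b ^ (b+1) ≤ 1/2 :=
    hW0.eventually (eventually_le_nhds (by norm_num))
  have hinv : Tendsto (fun b : ℕ => (z b ^ (b+1))⁻¹) atTop atTop := by
    apply Filter.Tendsto.inv_tendsto_nhdsGT_zero
    exact tendsto_nhdsWithin_of_tendsto_nhds_of_eventually_within _ hW0
      (hWpos.mono fun b h => h)
  have hlogW : Tendsto (fun b : ℕ => (1/4) * Real.log (z b ^ (b+1))⁻¹) atTop atTop := by
    apply Tendsto.const_mul_atTop (by norm_num : (0:ℝ) < 1/4)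
    exact Real.tendsto_log_atTop.comp hinv
  have hbw : Tendsto (fun b : ℕ => (b:ℝ) * z b ^ (b+1)) atTop atTop := by
    apply tendsto_atTop_mono' atTop ?_ hlogW
    filter_upwards [hfacts, hWhalf, eventually_ge_atTop 1] with b hb hwh hb1
    exact aux_log10 b (z b) hb1 hb.1 hb.2.1 hb.2.2.1 hwh
  have hfracnum : Tendsto (fun b : ℕ => 1 - 2 * z b ^ (b+1) + z b * z b ^ (b+1)) atTop (nhds 1) := by
    have := (hc1.sub (hW0.const_mul 2)).add (hz1.mul hW0)
    simpa using this
  have hfrac : Tendsto (fun b : ℕ =>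
      (1 - 2 * z b ^ (b+1) + z b * z b ^ (b+1)) / ((b:ℝ) * z b ^ (b+1))) atTop (nhds 0) :=
    Tendsto.div_atTop hfracnum hbw
  have hDg : Tendsto (fun b : ℕ =>
      (1 - 2 * z b ^ (b+1) + z b * z b ^ (b+1)) / ((b:ℝ) * z b ^ (b+1))
        + (1 - z b ^ (b+1)) * (1 - 2 * z b ^ (b+1))) atTop (nhds 1) := by
    have := hfrac.add ((hc1.sub hW0).mul (hc1.sub (hW0.const_mul 2)))
    simpa using this
  have hDgpos : ∀ᶠ b : ℕ in atTop, 0 <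
      (1 - 2 * z b ^ (b+1) + z b * z b ^ (b+1)) / ((b:ℝ) * z b ^ (b+1))
        + (1 - z b ^ (b+1)) * (1 - 2 * z b ^ (b+1)) :=
    hDg.eventually (eventually_gt_nhds (by norm_num))
  have hg : Tendsto (fun b : ℕ => (1 - z b ^ (b+1))^2 /
      ((1 - 2 * z b ^ (b+1) + z b * z b ^ (b+1)) / ((b:ℝ) * z b ^ (b+1))
        + (1 - z b ^ (b+1)) * (1 - 2 * z b ^ (b+1)))) atTop (nhds 1) := by
    have := ((hc1.sub hW0).pow 2).div hDg one_ne_zero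
    simpa [Pi.div_def] using this
  refine Tendsto.congr' ?_ hg
  filter_upwards [hfacts, hWpos, hDgpos, eventually_ge_atTop 1] with b hf hWp hDp hb1
  obtain ⟨h0, h1, hkey, -⟩ := hf
  have hBpos : (0:ℝ) < (b:ℝ) := by exact_mod_cast hb1.trans_lt' Nat.zero_lt_one
  have hp2 : z b ^ (b+2) = z b ^ (b+1) * z b := by
    rw [show b+2 = (b+1)+1 from rfl, pow_succ]
  simp only [hp2]
  set W := z b ^ (b+1) with hWdef
  have hZeq : z b = 1 - W * (1 - W) := by linarith
  rw [hZeq] at hDp ⊢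
  have hBne : (b:ℝ) ≠ 0 := ne_of_gt hBpos
  have hWne : W ≠ 0 := ne_of_gt hWp
  set D := (1 - 2 * W + (1 - W * (1 - W)) * W) / ((b:ℝ) * W) + (1 - W) * (1 - 2 * W)
    with hDdef
  have hDne : D ≠ 0 := ne_of_gt hDp
  have hBWne : (b:ℝ) * W ≠ 0 := mul_ne_zero hBne hWne
  have hD2 : D * ((b:ℝ) * W) = (1 - 2 * W + (1 - W * (1 - W)) * W)
      + (1 - W) * (1 - 2 * W) * ((b:ℝ) * W) := by
    rw [hDdef, add_mul, div_mul_cancel₀ _ hBWne]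
  have hden : (1 + (b:ℝ) - (b:ℝ) * (1 - W * (1 - W)) - 2 * W - 2 * (b:ℝ) * W
        + W * (1 - W * (1 - W)) + 2 * (b:ℝ) * (W * (1 - W * (1 - W))))
      = D * ((b:ℝ) * W) := by
    rw [hD2]; ring
  rw [hden]
  field_simp
  ring
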